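/- arXiv:1901.06807 — 5 statements merged into one kernel-verified Lean document; each statement's English description precedes it below -/
import Mathlib

section
/- Let X and Y be positive definite n×n complex matrices and let p > 1 be real. Then Tr(X^p Y^{1-p}) ≥ p·Tr(X) + (1-p)·Tr(Y) (the reverse tracial Young inequality). -/
open Matrix ComplexOrder

variable {n : ℕ}

/-- Apply a real function to a matrix via the spectral decomposition (functional calculus).
Returns `0` if the matrix is not Hermitian. -/
noncomputable def matFun (f : ℝ → ℝ) (A : Matrix (Fin n) (Fin n) ℂ) :
    Matrix (Fin n) (Fin n) ℂ :=
  if hA : A.IsHermitian then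
    (hA.eigenvectorUnitary : Matrix (Fin n) (Fin n) ℂ) *
      Matrix.diagonal (fun i => (f (hA.eigenvalues i) : ℂ)) *
      (star hA.eigenvectorUnitary : Matrix (Fin n) (Fin n) ℂ)
  else 0

/-- Matrix power `A^r` by functional calculus. -/
noncomputable def mpow (A : Matrix (Fin n) (Fin n) ℂ) (r : ℝ) : Matrix (Fin n) (Fin n) ℂ :=
  matFun (fun t => t ^ r) A

/-- Deformed matrix logarithm `log_q`. -/
noncomputable def mlogq (q : ℝ) (A : Matrix (Fin n) (Fin n) ℂ) : Matrix (Fin n) (Fin n) ℂ :=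
  matFun (fun t => if q = 1 then Real.log t else (t ^ (q - 1) - 1) / (q - 1)) A

/-- Deformed matrix exponential `exp_q`. -/
noncomputable def mexpq (q : ℝ) (M : Matrix (Fin n) (Fin n) ℂ) : Matrix (Fin n) (Fin n) ℂ :=
  matFun (fun s => if q = 1 then Real.exp s else ((q - 1) * s + 1) ^ (1 / (q - 1))) M

/-- Real part of the trace. -/
noncomputable def rtr (A : Matrix (Fin n) (Fin n) ℂ) : ℝ := (Matrix.trace A).re

/-- Scalar deformed logarithm. -/
noncomputable def dlog (q t : ℝ) : ℝ := if q = 1 then Real.log t else (t ^ (q - 1) - 1) / (q - 1)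

-- scalar reverse Young
lemma scalar_young {a b p : ℝ} (ha : 0 < a) (hb : 0 < b) (hp : 1 < p) :
    p * a + (1 - p) * b ≤ a ^ p * b ^ (1 - p) := by
  have ht : (0:ℝ) < a / b := div_pos ha hb
  have hber : 1 + p * (a / b - 1) ≤ (a / b) ^ p := by
    have := one_add_mul_self_le_rpow_one_add (by linarith : (-1:ℝ) ≤ a / b - 1) hp.le
    simpa using this
  have hb' : b ^ (1 - p) = b / b ^ p := by
    rw [Real.rpow_sub hb, Real.rpow_one]
  have hkey : a ^ p * b ^ (1 - p) = b * (a / b) ^ p := by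
    rw [hb', Real.div_rpow ha.le hb.le]
    field_simp
  rw [hkey]
  have := mul_le_mul_of_nonneg_left hber hb.le
  calc p * a + (1 - p) * b = b * (1 + p * (a / b - 1)) := by field_simp; ring
    _ ≤ b * (a / b) ^ p := this

lemma trace_conj_diag {n : ℕ} (U V : Matrix (Fin n) (Fin n) ℂ) (d e : Fin n → ℂ) :
    Matrix.trace (U * Matrix.diagonal d * star U * (V * Matrix.diagonal e * star V)) =
    ∑ i, ∑ j, d i * e j * ((star U * V) i j * star ((star U * V) i j)) := by
  have h1 : U * Matrix.diagonal d * star U * (V * Matrix.diagonal e * star V)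
      = U * (Matrix.diagonal d * (star U * (V * (Matrix.diagonal e * star V)))) := by
    simp only [Matrix.mul_assoc]
  rw [h1, Matrix.trace_mul_comm]
  have h2 : Matrix.diagonal d * (star U * (V * (Matrix.diagonal e * star V))) * U
      = (Matrix.diagonal d * (star U * V)) * (Matrix.diagonal e * (star V * U)) := by
    simp only [Matrix.mul_assoc]
  have h3 : star V * U = star (star U * V) := by
    rw [Matrix.star_mul, star_star]
  rw [h2, h3]
  simp only [Matrix.trace, Matrix.diag, Matrix.mul_apply, Matrix.diagonal_apply,
    Matrix.star_apply, ite_mul, zero_mul, Finset.sum_ite_eq, Finset.mem_univ, if_true]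
  congr 1; ext i; congr 1; ext j
  ring

theorem reverse_tracial_young_gt_one {n : ℕ} (X Y : Matrix (Fin n) (Fin n) ℂ)
    (hX : X.PosDef) (hY : Y.PosDef) (p : ℝ) (hp : 1 < p) :
    p * rtr X + (1 - p) * rtr Y ≤ rtr (mpow X p * mpow Y (1 - p)) := by
  classical
  have hXh : X.IsHermitian := hX.1
  have hYh : Y.IsHermitian := hY.1
  set a := hXh.eigenvalues with ha
  set b := hYh.eigenvalues with hb
  set U : Matrix (Fin n) (Fin n) ℂ := ↑hXh.eigenvectorUnitary with hU
  set V : Matrix (Fin n) (Fin n) ℂ := ↑hYh.eigenvectorUnitary with hV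
  set W : Matrix (Fin n) (Fin n) ℂ := star U * V with hWdef
  have hUU : U * star U = 1 := Matrix.mem_unitaryGroup_iff.mp hXh.eigenvectorUnitary.2
  have hUU' : star U * U = 1 := Matrix.mem_unitaryGroup_iff'.mp hXh.eigenvectorUnitary.2
  have hVV : V * star V = 1 := Matrix.mem_unitaryGroup_iff.mp hYh.eigenvectorUnitary.2
  have hVV' : star V * V = 1 := Matrix.mem_unitaryGroup_iff'.mp hYh.eigenvectorUnitary.2
  have hWW : W * star W = 1 := by
    calc W * star W = star U * (V * star V) * U := by
          rw [hWdef, Matrix.star_mul, star_star]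
          simp only [Matrix.mul_assoc]
      _ = 1 := by rw [hVV, Matrix.mul_one, hUU']
  have hWW' : star W * W = 1 := by
    calc star W * W = star V * (U * star U) * V := by
          rw [hWdef, Matrix.star_mul, star_star]
          simp only [Matrix.mul_assoc]
      _ = 1 := by rw [hUU, Matrix.mul_one, hVV']
  have hrow : ∀ i, ∑ j, Complex.normSq (W i j) = 1 := by
    intro i
    have h := congrFun (congrFun hWW i) i
    rw [Matrix.mul_apply] at h
    simp only [Matrix.star_apply, RCLike.star_def, Complex.mul_conj, Matrix.one_apply_eq] at h
    exact_mod_cast h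
  have hcol : ∀ j, ∑ i, Complex.normSq (W i j) = 1 := by
    intro j
    have h := congrFun (congrFun hWW' j) j
    rw [Matrix.mul_apply] at h
    simp only [Matrix.star_apply, RCLike.star_def, mul_comm, Complex.mul_conj, Matrix.one_apply_eq] at h
    exact_mod_cast h
  have htrX : rtr X = ∑ i, a i := by
    have h : X.trace = ∑ i, (a i : ℂ) := by
      conv_lhs => rw [hXh.spectral_theorem]
      rw [Unitary.conjStarAlgAut_apply, Matrix.trace_mul_cycle, hUU', Matrix.one_mul, Matrix.trace_diagonal]
      rfl
    rw [rtr, h]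
    simp
  have htrY : rtr Y = ∑ i, b i := by
    have h : Y.trace = ∑ i, (b i : ℂ) := by
      conv_lhs => rw [hYh.spectral_theorem]
      rw [Unitary.conjStarAlgAut_apply, Matrix.trace_mul_cycle, hVV', Matrix.one_mul, Matrix.trace_diagonal]
      rfl
    rw [rtr, h]
    simp
  have hmX : mpow X p = U * Matrix.diagonal (fun i => ((a i ^ p : ℝ) : ℂ)) * star U := by
    rw [mpow, matFun, dif_pos hXh]
  have hmY : mpow Y (1 - p) = V * Matrix.diagonal (fun i => ((b i ^ (1 - p) : ℝ) : ℂ)) * star V := by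
    rw [mpow, matFun, dif_pos hYh]
  have hkey : rtr (mpow X p * mpow Y (1 - p))
      = ∑ i, ∑ j, (a i ^ p) * (b j ^ (1 - p)) * Complex.normSq (W i j) := by
    rw [rtr, hmX, hmY, trace_conj_diag]
    rw [← hWdef]
    have : ∀ i j, ((a i ^ p : ℝ) : ℂ) * ((b j ^ (1 - p) : ℝ) : ℂ) * (W i j * star (W i j))
        = (((a i ^ p) * (b j ^ (1 - p)) * Complex.normSq (W i j) : ℝ) : ℂ) := by
      intro i j
      rw [RCLike.star_def, Complex.mul_conj]
      push_cast
      ring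
    simp only [this]
    push_cast
    simp
  rw [hkey, htrX, htrY]
  have hstep : ∑ i, ∑ j, (p * a i + (1 - p) * b j) * Complex.normSq (W i j)
      ≤ ∑ i, ∑ j, (a i ^ p) * (b j ^ (1 - p)) * Complex.normSq (W i j) := by
    apply Finset.sum_le_sum
    intro i _
    apply Finset.sum_le_sum
    intro j _
    exact mul_le_mul_of_nonneg_right
      (scalar_young (hX.eigenvalues_pos i) (hY.eigenvalues_pos j) hp)
      (Complex.normSq_nonneg _)
  refine le_trans (le_of_eq ?_) hstep
  calc p * ∑ i, a i + (1 - p) * ∑ j, b j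
      = (∑ i, (p * a i) * ∑ j, Complex.normSq (W i j))
        + ∑ j, ((1 - p) * b j) * ∑ i, Complex.normSq (W i j) := by
        simp only [hrow, hcol, mul_one, Finset.mul_sum]
    _ = (∑ i, ∑ j, (p * a i) * Complex.normSq (W i j))
        + ∑ i, ∑ j, ((1 - p) * b j) * Complex.normSq (W i j) := by
        simp only [Finset.mul_sum]
        rw [Finset.sum_comm (f := fun i j => ((1 - p) * b j) * Complex.normSq (W i j))]
    _ = ∑ i, ∑ j, (p * a i + (1 - p) * b j) * Complex.normSq (W i j) := by
        rw [← Finset.sum_add_distrib]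
        congr 1; ext i
        rw [← Finset.sum_add_distrib]
        congr 1; ext j
        ring
end

section
/- Let q > 2 and let Y be a positive definite n×n complex matrix. Then Tr(Y) equals the infimum over positive definite matrices X of Tr(X) - Tr(X^{2-q}(log_q X - log_q Y)), and this infimum is attained at X = Y. -/
open Matrix ComplexOrder

variable {n : ℕ}

lemma matFun_eq (f : ℝ → ℝ) {A : Matrix (Fin n) (Fin n) ℂ} (hA : A.IsHermitian) :
    matFun f A = (hA.eigenvectorUnitary : Matrix (Fin n) (Fin n) ℂ) *
      Matrix.diagonal (fun i => (f (hA.eigenvalues i) : ℂ)) *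
      (star hA.eigenvectorUnitary : Matrix (Fin n) (Fin n) ℂ) := by
  rw [matFun, dif_pos hA]

lemma rtr_matFun (f : ℝ → ℝ) {A : Matrix (Fin n) (Fin n) ℂ} (hA : A.IsHermitian) :
    rtr (matFun f A) = ∑ i, f (hA.eigenvalues i) := by
  rw [rtr, matFun_eq f hA, trace_mul_cycle]
  rw [(Matrix.mem_unitaryGroup_iff'.mp hA.eigenvectorUnitary.2 : _), one_mul, trace_diagonal]
  simp [Complex.re_sum]

lemma matFun_mul_matFun (f g : ℝ → ℝ) {A : Matrix (Fin n) (Fin n) ℂ} (hA : A.IsHermitian) :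
    matFun f A * matFun g A = matFun (fun t => f t * g t) A := by
  rw [matFun_eq f hA, matFun_eq g hA, matFun_eq _ hA]
  have h1 : (star hA.eigenvectorUnitary : Matrix (Fin n) (Fin n) ℂ) *
      (hA.eigenvectorUnitary : Matrix (Fin n) (Fin n) ℂ) = 1 :=
    Matrix.mem_unitaryGroup_iff'.mp hA.eigenvectorUnitary.2
  simp only [Matrix.mul_assoc]
  rw [← Matrix.mul_assoc (star hA.eigenvectorUnitary : Matrix (Fin n) (Fin n) ℂ), h1, one_mul,
    ← Matrix.mul_assoc (Matrix.diagonal _), Matrix.diagonal_mul_diagonal]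
  simp [Complex.ofReal_mul]

lemma helper_trace (d1 d2 : Fin n → ℝ) (W : Matrix (Fin n) (Fin n) ℂ) :
    (Matrix.trace (star W * (Matrix.diagonal (fun i => (d1 i : ℂ)) * (W *
      Matrix.diagonal (fun j => (d2 j : ℂ)))))).re =
    ∑ i, ∑ j, Complex.normSq (W i j) * (d1 i * d2 j) := by
  rw [Matrix.trace, Complex.re_sum]
  have step : ∀ k, ((star W * (Matrix.diagonal (fun i => (d1 i : ℂ)) * (W *
      Matrix.diagonal (fun j => (d2 j : ℂ))))).diag k).re =
      ∑ i, Complex.normSq (W i k) * (d1 i * d2 k) := by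
    intro k
    rw [Matrix.diag_apply, Matrix.mul_apply, Complex.re_sum]
    refine Finset.sum_congr rfl fun i _ => ?_
    rw [Matrix.star_apply, Matrix.diagonal_mul, Matrix.mul_diagonal, Complex.star_def]
    have h : (starRingEnd ℂ) (W i k) * ((d1 i : ℂ) * (W i k * (d2 k : ℂ))) =
        ((Complex.normSq (W i k) * (d1 i * d2 k) : ℝ) : ℂ) := by
      push_cast
      rw [← Complex.mul_conj (W i k)]
      ring
    rw [h, Complex.ofReal_re]
  rw [Finset.sum_congr rfl fun k _ => step k]
  exact Finset.sum_comm

lemma rtr_matFun_mul (f g : ℝ → ℝ) {A B : Matrix (Fin n) (Fin n) ℂ}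
    (hA : A.IsHermitian) (hB : B.IsHermitian) :
    rtr (matFun f A * matFun g B) =
      ∑ i, ∑ j, Complex.normSq ((star (hA.eigenvectorUnitary : Matrix (Fin n) (Fin n) ℂ) *
          (hB.eigenvectorUnitary : Matrix (Fin n) (Fin n) ℂ)) i j) *
        (f (hA.eigenvalues i) * g (hB.eigenvalues j)) := by
  set U : Matrix (Fin n) (Fin n) ℂ := (hA.eigenvectorUnitary : Matrix (Fin n) (Fin n) ℂ) with hU
  set V : Matrix (Fin n) (Fin n) ℂ := (hB.eigenvectorUnitary : Matrix (Fin n) (Fin n) ℂ) with hV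
  set W : Matrix (Fin n) (Fin n) ℂ := star U * V with hW
  have key : matFun f A * matFun g B =
      U * (Matrix.diagonal (fun i => (f (hA.eigenvalues i) : ℂ)) * W *
        Matrix.diagonal (fun j => (g (hB.eigenvalues j) : ℂ))) * star V := by
    rw [matFun_eq f hA, matFun_eq g hB, hW]
    simp only [Matrix.mul_assoc]
    rfl
  have hsVU : star V * U = star W := by rw [hW]; simp [StarMul.star_mul]
  rw [rtr, key, trace_mul_cycle, ← Matrix.mul_assoc, hsVU]
  simp only [Matrix.mul_assoc]
  rw [helper_trace (fun i => f (hA.eigenvalues i)) (fun j => g (hB.eigenvalues j)) W]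

lemma matFun_id {A : Matrix (Fin n) (Fin n) ℂ} (hA : A.IsHermitian) :
    matFun (fun t => t) A = A := by
  rw [matFun_eq _ hA]
  exact hA.spectral_theorem.symm

lemma sum_normSq_row {U V : Matrix (Fin n) (Fin n) ℂ} (hU : U ∈ Matrix.unitaryGroup (Fin n) ℂ)
    (hV : V ∈ Matrix.unitaryGroup (Fin n) ℂ) (i : Fin n) :
    ∑ j, Complex.normSq ((star U * V) i j) = 1 := by
  have h : (star U * V) * star (star U * V) = 1 := by
    rw [StarMul.star_mul, star_star, Matrix.mul_assoc, ← Matrix.mul_assoc V,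
      Matrix.mem_unitaryGroup_iff.mp hV, one_mul, Matrix.mem_unitaryGroup_iff'.mp hU]
  have h2 := congrArg (fun M : Matrix (Fin n) (Fin n) ℂ => (M i i).re) h
  simp only [Matrix.mul_apply, Matrix.star_apply, Matrix.one_apply_eq, Complex.one_re] at h2
  rw [← h2, Complex.re_sum]
  refine Finset.sum_congr rfl fun j _ => ?_
  rw [Complex.star_def, Complex.mul_conj, Complex.ofReal_re]
  simp [Matrix.mul_apply, Matrix.star_apply, Complex.star_def]

lemma sum_normSq_col {U V : Matrix (Fin n) (Fin n) ℂ} (hU : U ∈ Matrix.unitaryGroup (Fin n) ℂ)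
    (hV : V ∈ Matrix.unitaryGroup (Fin n) ℂ) (j : Fin n) :
    ∑ i, Complex.normSq ((star U * V) i j) = 1 := by
  have h : star (star U * V) * (star U * V) = 1 := by
    rw [StarMul.star_mul, star_star, Matrix.mul_assoc, ← Matrix.mul_assoc U,
      Matrix.mem_unitaryGroup_iff.mp hU, one_mul, Matrix.mem_unitaryGroup_iff'.mp hV]
  have h2 := congrArg (fun M : Matrix (Fin n) (Fin n) ℂ => (M j j).re) h
  simp only [Matrix.mul_apply, Matrix.star_apply, Matrix.one_apply_eq, Complex.one_re] at h2
  rw [← h2, Complex.re_sum]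
  refine Finset.sum_congr rfl fun i _ => ?_
  rw [Complex.star_def, mul_comm, Complex.mul_conj, Complex.ofReal_re]
  simp [Matrix.mul_apply, Matrix.star_apply, Complex.star_def]

lemma scalar_key {q x y : ℝ} (hq : 2 < q) (hx : 0 < x) (hy : 0 < y) :
    y ≤ x - x ^ (2 - q) * (dlog q x - dlog q y) := by
  have hq1 : q ≠ 1 := by linarith
  have hp : (0:ℝ) < q - 1 := by linarith
  rw [dlog, dlog, if_neg hq1, if_neg hq1]
  have hb : (0:ℝ) < x ^ (q-1) := Real.rpow_pos_of_pos hx _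
  have hab : x ^ (2-q) * x ^ (q-1) = x := by
    rw [← Real.rpow_add hx]; norm_num
  have hbern : 1 + (q-1) * (y/x - 1) ≤ (y/x) ^ (q-1) := by
    have hs : (-1:ℝ) ≤ y/x - 1 := by
      have : (0:ℝ) < y/x := div_pos hy hx
      linarith
    have := one_add_mul_self_le_rpow_one_add hs (by linarith : (1:ℝ) ≤ q-1)
    simpa using this
  have hdiv : (y/x) ^ (q-1) = y^(q-1) / x^(q-1) := Real.div_rpow hy.le hx.le _
  have hmain : x + (q-1)*(y - x) ≤ x^(2-q) * y^(q-1) := by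
    have h2 := mul_le_mul_of_nonneg_left hbern hx.le
    rw [hdiv] at h2
    have e1 : x * (1 + (q-1)*(y/x-1)) = x + (q-1)*(y-x) := by field_simp
    have e2 : x * (y^(q-1) / x^(q-1)) = x^(2-q) * y^(q-1) := by
      rw [mul_div_assoc', div_eq_iff hb.ne']
      linear_combination (-(y ^ (q-1))) * hab
    rw [e1, e2] at h2
    exact h2
  have hE : x - x^(2-q) * ((x^(q-1)-1)/(q-1) - (y^(q-1)-1)/(q-1)) =
      x - (x - x^(2-q)*y^(q-1))/(q-1) := by
    field_simp
    linear_combination (-1) * hab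
  rw [hE]
  have hfin : (x - x^(2-q)*y^(q-1))/(q-1) ≤ x - y := by
    rw [div_le_iff₀ hp]; nlinarith [hmain]
  linarith

lemma mlogq_eq (q : ℝ) (A : Matrix (Fin n) (Fin n) ℂ) : mlogq q A = matFun (dlog q) A := rfl

lemma rtr_sub (A B : Matrix (Fin n) (Fin n) ℂ) : rtr (A - B) = rtr A - rtr B := by
  simp [rtr, Matrix.trace_sub, Complex.sub_re]

theorem trace_variational_min {n : ℕ} (q : ℝ) (hq : 2 < q)
    (Y : Matrix (Fin n) (Fin n) ℂ) (hY : Y.PosDef) :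
    (∀ X : Matrix (Fin n) (Fin n) ℂ, X.PosDef →
      rtr Y ≤ rtr X - rtr (mpow X (2 - q) * (mlogq q X - mlogq q Y))) ∧
    rtr Y - rtr (mpow Y (2 - q) * (mlogq q Y - mlogq q Y)) = rtr Y := by
  constructor
  · intro X hX
    have hXh : X.IsHermitian := hX.1
    have hYh : Y.IsHermitian := hY.1
    have hlam : ∀ i, 0 < hXh.eigenvalues i := fun i => hX.eigenvalues_pos i
    have hnu : ∀ j, 0 < hYh.eigenvalues j := fun j => hY.eigenvalues_pos j
    set lam := hXh.eigenvalues with hlamdef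
    set nu := hYh.eigenvalues with hnudef
    set c : Fin n → Fin n → ℝ := fun i j =>
      Complex.normSq ((star (hXh.eigenvectorUnitary : Matrix (Fin n) (Fin n) ℂ) *
        (hYh.eigenvectorUnitary : Matrix (Fin n) (Fin n) ℂ)) i j) with hcdef
    have hrow : ∀ i, ∑ j, c i j = 1 := fun i =>
      sum_normSq_row hXh.eigenvectorUnitary.2 hYh.eigenvectorUnitary.2 i
    have hcol : ∀ j, ∑ i, c i j = 1 := fun j =>
      sum_normSq_col hXh.eigenvectorUnitary.2 hYh.eigenvectorUnitary.2 j
    have hc0 : ∀ i j, 0 ≤ c i j := fun i j => Complex.normSq_nonneg _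
    have htrX : rtr X = ∑ i, lam i := by
      conv_lhs => rw [← matFun_id hXh]
      exact rtr_matFun _ hXh
    have htrY : rtr Y = ∑ j, nu j := by
      conv_lhs => rw [← matFun_id hYh]
      exact rtr_matFun _ hYh
    have h1 : rtr (mpow X (2 - q) * mlogq q X) = ∑ i, lam i ^ (2 - q) * dlog q (lam i) := by
      rw [mpow, mlogq_eq, matFun_mul_matFun _ _ hXh, rtr_matFun _ hXh]
    have h2 : rtr (mpow X (2 - q) * mlogq q Y) =
        ∑ i, ∑ j, c i j * (lam i ^ (2 - q) * dlog q (nu j)) := by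
      rw [mpow, mlogq_eq, rtr_matFun_mul _ _ hXh hYh]
    have hsplit : rtr (mpow X (2 - q) * (mlogq q X - mlogq q Y)) =
        rtr (mpow X (2 - q) * mlogq q X) - rtr (mpow X (2 - q) * mlogq q Y) := by
      rw [Matrix.mul_sub, rtr_sub]
    rw [hsplit, htrX, htrY, h1, h2]
    calc ∑ j, nu j = ∑ j, (∑ i, c i j) * nu j := by
          refine Finset.sum_congr rfl fun j _ => ?_
          rw [hcol j, one_mul]
      _ = ∑ i, ∑ j, c i j * nu j := by
          rw [Finset.sum_comm]
          exact Finset.sum_congr rfl fun j _ => Finset.sum_mul ..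
      _ ≤ ∑ i, ∑ j, c i j * (lam i - lam i ^ (2 - q) * (dlog q (lam i) - dlog q (nu j))) := by
          refine Finset.sum_le_sum fun i _ => Finset.sum_le_sum fun j _ => ?_
          exact mul_le_mul_of_nonneg_left (scalar_key hq (hlam i) (hnu j)) (hc0 i j)
      _ = ∑ i, lam i - (∑ i, lam i ^ (2 - q) * dlog q (lam i) -
            ∑ i, ∑ j, c i j * (lam i ^ (2 - q) * dlog q (nu j))) := by
          have key : ∀ i, ∑ j, c i j * (lam i - lam i ^ (2 - q) * (dlog q (lam i) - dlog q (nu j)))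
              = (lam i - lam i ^ (2 - q) * dlog q (lam i)) +
                ∑ j, c i j * (lam i ^ (2 - q) * dlog q (nu j)) := by
            intro i
            have e : ∀ j, c i j * (lam i - lam i ^ (2 - q) * (dlog q (lam i) - dlog q (nu j)))
                = c i j * (lam i - lam i ^ (2 - q) * dlog q (lam i)) +
                  c i j * (lam i ^ (2 - q) * dlog q (nu j)) := fun j => by ring
            rw [Finset.sum_congr rfl fun j _ => e j, Finset.sum_add_distrib,
              ← Finset.sum_mul, hrow i, one_mul]
          rw [Finset.sum_congr rfl fun i _ => key i, Finset.sum_add_distrib,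
            Finset.sum_sub_distrib]
          ring
  · rw [sub_self, Matrix.mul_zero]
    simp [rtr]
end

section
/- For real numbers s and λ > 0 with q ≤ 2, q ≠ 1, and (q-1)s + 1 > 0 (so that exp_q(s) is defined, when q < 1 assume (q-1)s+1 > 0 as well), one has exp_q(s) = max over λ > 0 of λ - λ^{2-q}(log_q λ - s), with the maximum attained at λ = exp_q(s). -/
/-- Scalar deformed exponential (for `q ≠ 1`). -/
noncomputable def dexp (q s : ℝ) : ℝ := ((q - 1) * s + 1) ^ (1 / (q - 1))

theorem scalar_legendre_max (q s : ℝ) (hq : q ≤ 2) (hq1 : q ≠ 1)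
    (hs : 0 < (q - 1) * s + 1) :
    (∀ t : ℝ, 0 < t → t - t ^ (2 - q) * (dlog q t - s) ≤ dexp q s) ∧
    0 < dexp q s ∧
    dexp q s - (dexp q s) ^ (2 - q) * (dlog q (dexp q s) - s) = dexp q s := by
  have hq1' : q - 1 ≠ 0 := sub_ne_zero.mpr hq1
  have hepos : 0 < dexp q s := Real.rpow_pos_of_pos hs _
  set e := dexp q s with he
  have hea : e ^ (q - 1) = (q - 1) * s + 1 := by
    rw [he, dexp, ← Real.rpow_mul hs.le, one_div_mul_cancel hq1', Real.rpow_one]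
  have hlog : dlog q e = s := by
    rw [dlog, if_neg hq1, hea]
    field_simp
    ring
  refine ⟨?_, hepos, by rw [hlog]; ring⟩
  intro t ht
  set u := t / e with hu
  have hupos : 0 < u := div_pos ht hepos
  have hue : u * e = t := div_mul_cancel₀ t hepos.ne'
  have hAB : u ^ (2 - q) * u ^ (q - 1) = u := by
    rw [← Real.rpow_add hupos]; norm_num
  have he2 : e ^ (2 - q) * ((q - 1) * s + 1) = e := by
    rw [← hea, ← Real.rpow_add hepos]; norm_num
  have ht2 : t ^ (2 - q) = u ^ (2 - q) * e ^ (2 - q) := by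
    rw [← hue, Real.mul_rpow hupos.le hepos.le]
  have htq : t ^ (q - 1) = u ^ (q - 1) * e ^ (q - 1) := by
    rw [← hue, Real.mul_rpow hupos.le hepos.le]
  have hmain : t - t ^ (2 - q) * (dlog q t - s)
      = e * (u - (u - u ^ (2 - q)) / (q - 1)) := by
    rw [dlog, if_neg hq1, ht2, htq, hea, ← hue]
    have hinv : (q - 1) * (q - 1)⁻¹ = 1 := mul_inv_cancel₀ hq1'
    linear_combination (-(e ^ (2 - q) * ((q - 1) * s + 1)) / (q - 1)) * hAB +
      ((u ^ (2 - q) - u) / (q - 1)) * he2 + (-(u ^ (2 - q) * e ^ (2 - q) * s)) * hinv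
  rw [hmain]
  -- Bernoulli : bound u - (u - u^(2-q))/(q-1) ≤ 1
  have hbound : u - (u - u ^ (2 - q)) / (q - 1) ≤ 1 := by
    have hu1 : (-1 : ℝ) ≤ u - 1 := by linarith
    have hform : u ^ (2 - q) = (1 + (u - 1)) ^ (2 - q) := by ring_nf
    rcases lt_or_gt_of_ne (sub_ne_zero.mpr hq1) with hneg | hpos
    · -- q < 1, so 2 - q > 1 : 1 + (2-q)(u-1) ≤ u^(2-q)
      have hb := one_add_mul_self_le_rpow_one_add hu1 (p := 2 - q) (by linarith)
      rw [← hform] at hb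
      have : u - u ^ (2 - q) ≤ (u - 1) * (q - 1) := by nlinarith
      have h2 : u - 1 ≤ (u - u ^ (2 - q)) / (q - 1) := by
        rw [le_div_iff_of_neg hneg]; linarith [this]
      linarith
    · -- q > 1, so 0 ≤ 2 - q ≤ 1 : u^(2-q) ≤ 1 + (2-q)(u-1)
      have hb := rpow_one_add_le_one_add_mul_self hu1 (p := 2 - q) (by linarith) (by linarith)
      rw [← hform] at hb
      have h2 : u - 1 ≤ (u - u ^ (2 - q)) / (q - 1) := by
        rw [le_div_iff₀ hpos]; nlinarith
      linarith
  calc e * (u - (u - u ^ (2 - q)) / (q - 1)) ≤ e * 1 := by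
        exact mul_le_mul_of_nonneg_left hbound hepos.le
    _ = e := mul_one e
end

section
/- For real numbers s and q > 2 with (q-1)s + 1 > 0, one has exp_q(s) = min over λ > 0 of λ - λ^{2-q}(log_q λ - s), with the minimum attained at λ = exp_q(s). -/
theorem scalar_legendre_min (q s : ℝ) (hq : 2 < q)
    (hs : 0 < (q - 1) * s + 1) :
    (∀ t : ℝ, 0 < t → dexp q s ≤ t - t ^ (2 - q) * (dlog q t - s)) ∧
    0 < dexp q s ∧
    dexp q s - (dexp q s) ^ (2 - q) * (dlog q (dexp q s) - s) = dexp q s := by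
  have hq1 : q ≠ 1 := by linarith
  have hq1' : (0:ℝ) < q - 1 := by linarith
  have hq1n : q - 1 ≠ 0 := ne_of_gt hq1'
  set A := (q - 1) * s + 1 with hA
  have he : dexp q s = A ^ (1 / (q - 1)) := rfl
  have hepos : 0 < dexp q s := by
    rw [he]; exact Real.rpow_pos_of_pos hs _
  have heq1 : (dexp q s) ^ (q - 1) = A := by
    rw [he, ← Real.rpow_mul hs.le, one_div, inv_mul_cancel₀ hq1n, Real.rpow_one]
  have hlogzero : dlog q (dexp q s) - s = 0 := by
    simp only [dlog, hq1, if_false, heq1, hA]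
    field_simp; ring
  refine ⟨?_, hepos, by rw [hlogzero]; ring⟩
  intro t ht
  have key := Real.geom_mean_le_arith_mean2_weighted
    (w₁ := (q-2)/(q-1)) (w₂ := 1/(q-1)) (p₁ := t) (p₂ := A * t ^ (2-q))
    (div_nonneg (by linarith) hq1'.le) (by positivity) ht.le
    (by positivity) (by field_simp; ring)
  have hgm : t ^ ((q-2)/(q-1)) * (A * t ^ (2-q)) ^ (1/(q-1)) = dexp q s := by
    rw [Real.mul_rpow hs.le (Real.rpow_pos_of_pos ht _).le,
      ← Real.rpow_mul ht.le, mul_left_comm, ← Real.rpow_add ht, he]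
    have : (q - 2) / (q - 1) + (2 - q) * (1 / (q - 1)) = 0 := by field_simp; ring
    rw [this, Real.rpow_zero, mul_one]
  rw [hgm] at key
  have hrw : t - t ^ (2-q) * (dlog q t - s)
      = (q-2)/(q-1) * t + 1/(q-1) * (A * t ^ (2-q)) := by
    simp only [dlog, hq1, if_false]
    have huv : t ^ (2-q) * t ^ (q-1) = t := by
      rw [← Real.rpow_add ht]; norm_num
    field_simp
    linear_combination -huv
  rw [hrw]
  exact key
end

section
/- Let 1 < q ≤ 2 and let A, B be self-adjoint n×n matrices such that both A and A+B are bounded below by -1/(q-1)·I. Then log_q(Tr exp_q(A+B)) - log_q(Tr exp_q(A)) ≥ (Tr exp_q A)^{q-2} · Tr((exp_q A)^{2-q} B) (a Peierls–Bogolyubov type inequality). -/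
open Matrix ComplexOrder

variable {n : ℕ}

/-- Two unitary diagonalizations of the same matrix give the same functional calculus. -/
lemma diag_conj_congr (f : ℝ → ℝ) (U V : Matrix (Fin n) (Fin n) ℂ)
    (hU1 : star U * U = 1) (hU2 : U * star U = 1)
    (hV1 : star V * V = 1) (hV2 : V * star V = 1)
    (d e : Fin n → ℝ)
    (h : U * Matrix.diagonal (fun i => (d i : ℂ)) * star U
        = V * Matrix.diagonal (fun i => (e i : ℂ)) * star V) :
    U * Matrix.diagonal (fun i => (f (d i) : ℂ)) * star U
      = V * Matrix.diagonal (fun i => (f (e i) : ℂ)) * star V := by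
  set W : Matrix (Fin n) (Fin n) ℂ := star V * U with hW
  have key : W * Matrix.diagonal (fun i => (d i : ℂ))
      = Matrix.diagonal (fun i => (e i : ℂ)) * W := by
    calc W * Matrix.diagonal (fun i => (d i : ℂ))
        = star V * (U * Matrix.diagonal (fun i => (d i : ℂ)) * star U) * U := by
          simp only [hW, mul_assoc, hU1, mul_one]
      _ = star V * (V * Matrix.diagonal (fun i => (e i : ℂ)) * star V) * U := by rw [h]
      _ = Matrix.diagonal (fun i => (e i : ℂ)) * W := by
          simp only [hW, ← mul_assoc, hV1, one_mul]
  have key2 : W * Matrix.diagonal (fun i => (f (d i) : ℂ))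
      = Matrix.diagonal (fun i => (f (e i) : ℂ)) * W := by
    ext i j
    have h0 := congrFun (congrFun key i) j
    simp only [Matrix.mul_diagonal, Matrix.diagonal_mul] at h0 ⊢
    rcases eq_or_ne (W i j) 0 with hw | hw
    · simp [hw]
    · have hde : (d j : ℂ) = (e i : ℂ) := by
        have h1 : W i j * (d j : ℂ) = W i j * (e i : ℂ) := by rw [h0]; ring
        exact mul_left_cancel₀ hw h1
      have h2 : d j = e i := by exact_mod_cast hde
      rw [h2]; ring
  have hW2 : W * star W = 1 := by
    have h3 : W * star W = star V * (U * star U) * V := by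
      rw [hW, Matrix.star_mul, star_star]
      simp only [mul_assoc]
    rw [h3, hU2, mul_one, hV1]
  have hUVW : U = V * W := by
    simp only [hW, ← mul_assoc, hV2, one_mul]
  calc U * Matrix.diagonal (fun i => (f (d i) : ℂ)) * star U
      = V * (W * Matrix.diagonal (fun i => (f (d i) : ℂ)) * star W) * star V := by
        rw [hUVW, Matrix.star_mul]; simp only [mul_assoc]
    _ = V * (Matrix.diagonal (fun i => (f (e i) : ℂ)) * (W * star W)) * star V := by
        rw [key2]; simp only [mul_assoc]
    _ = V * Matrix.diagonal (fun i => (f (e i) : ℂ)) * star V := by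
        rw [hW2, mul_one]

lemma unitary_diag_isHermitian (U : Matrix (Fin n) (Fin n) ℂ) (d : Fin n → ℝ) :
    (U * Matrix.diagonal (fun i => (d i : ℂ)) * star U).IsHermitian := by
  have hd : (Matrix.diagonal (fun i => (d i : ℂ))).IsHermitian :=
    Matrix.isHermitian_diagonal_of_self_adjoint _
      (funext fun i => Complex.conj_ofReal (d i))
  have := Matrix.isHermitian_mul_mul_conjTranspose U hd
  simpa [Matrix.star_eq_conjTranspose] using this

/-- matFun of an explicit unitary diagonalization. -/
lemma matFun_diag (f : ℝ → ℝ) (U : Matrix (Fin n) (Fin n) ℂ)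
    (hU1 : star U * U = 1) (hU2 : U * star U = 1) (d : Fin n → ℝ) :
    matFun f (U * Matrix.diagonal (fun i => (d i : ℂ)) * star U)
      = U * Matrix.diagonal (fun i => (f (d i) : ℂ)) * star U := by
  have hM := unitary_diag_isHermitian U d
  have hE1 : star (hM.eigenvectorUnitary : Matrix (Fin n) (Fin n) ℂ) *
      (hM.eigenvectorUnitary : Matrix (Fin n) (Fin n) ℂ) = 1 :=
    Matrix.mem_unitaryGroup_iff'.mp hM.eigenvectorUnitary.2
  have hE2 : (hM.eigenvectorUnitary : Matrix (Fin n) (Fin n) ℂ) *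
      star (hM.eigenvectorUnitary : Matrix (Fin n) (Fin n) ℂ) = 1 :=
    Matrix.mem_unitaryGroup_iff.mp hM.eigenvectorUnitary.2
  have hst : U * Matrix.diagonal (fun i => (d i : ℂ)) * star U
      = (hM.eigenvectorUnitary : Matrix (Fin n) (Fin n) ℂ) *
        Matrix.diagonal (fun i => ((hM.eigenvalues i : ℝ) : ℂ)) *
        star (hM.eigenvectorUnitary : Matrix (Fin n) (Fin n) ℂ) := by
    conv_lhs => rw [hM.spectral_theorem]
    rfl
  rw [matFun, dif_pos hM]
  exact diag_conj_congr f _ U hE1 hE2 hU1 hU2 _ d hst.symm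

lemma rtr_unitary_diag (U : Matrix (Fin n) (Fin n) ℂ)
    (hU1 : star U * U = 1) (d : Fin n → ℝ) :
    rtr (U * Matrix.diagonal (fun i => (d i : ℂ)) * star U) = ∑ i, d i := by
  have h : Matrix.trace (U * Matrix.diagonal (fun i => (d i : ℂ)) * star U)
      = Matrix.trace (Matrix.diagonal (fun i => (d i : ℂ))) := by
    rw [Matrix.trace_mul_comm, ← mul_assoc, hU1, one_mul]
  rw [rtr, h, Matrix.trace_diagonal, Complex.re_sum]
  simp

lemma rtr_unitary_diag_mul (U : Matrix (Fin n) (Fin n) ℂ)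
    (hU1 : star U * U = 1) (d : Fin n → ℝ) (C : Matrix (Fin n) (Fin n) ℂ) :
    rtr (U * Matrix.diagonal (fun i => (d i : ℂ)) * star U * C)
      = ∑ i, d i * ((star U * C * U) i i).re := by
  have h : Matrix.trace (U * Matrix.diagonal (fun i => (d i : ℂ)) * star U * C)
      = Matrix.trace (Matrix.diagonal (fun i => (d i : ℂ)) * (star U * C * U)) := by
    calc Matrix.trace (U * Matrix.diagonal (fun i => (d i : ℂ)) * star U * C)
        = Matrix.trace (U * (Matrix.diagonal (fun i => (d i : ℂ)) * (star U * C))) := by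
          simp only [mul_assoc]
      _ = Matrix.trace ((Matrix.diagonal (fun i => (d i : ℂ)) * (star U * C)) * U) :=
          Matrix.trace_mul_comm _ _
      _ = Matrix.trace (Matrix.diagonal (fun i => (d i : ℂ)) * (star U * C * U)) := by
          simp only [mul_assoc]
  rw [rtr, h]
  have h2 : Matrix.trace (Matrix.diagonal (fun i => (d i : ℂ)) * (star U * C * U))
      = ∑ i, (d i : ℂ) * (star U * C * U) i i := by
    rw [Matrix.trace]
    congr 1
    funext i
    simp [Matrix.diag, Matrix.diagonal_mul]
  rw [h2, Complex.re_sum]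
  congr 1
  funext i
  exact Complex.re_ofReal_mul _ _

/-- Jensen + Hölder combination at the level of eigenvalue lists. -/
lemma trace_holder (p : ℝ) (hp1 : 1 ≤ p) (x y : Fin n → ℝ) (w : Fin n → Fin n → ℝ)
    (hx : ∀ i, 0 ≤ x i) (hy : ∀ j, 0 ≤ y j) (hw : ∀ i j, 0 ≤ w i j)
    (hrow : ∀ i, ∑ j, w i j = 1) (hcol : ∀ j, ∑ i, w i j = 1) :
    ∑ i, x i ^ (p - 1) * (∑ j, w i j * y j)
      ≤ (∑ i, x i ^ p) ^ ((p - 1) / p) * (∑ j, y j ^ p) ^ (1 / p) := by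
  have hppos : 0 < p := lt_of_lt_of_le one_pos hp1
  set c : Fin n → ℝ := fun i => ∑ j, w i j * y j with hc
  have hcnn : ∀ i, 0 ≤ c i := fun i => Finset.sum_nonneg fun j _ => mul_nonneg (hw i j) (hy j)
  have hjensen : ∀ i, c i ^ p ≤ ∑ j, w i j * y j ^ p := fun i =>
    Real.rpow_arith_mean_le_arith_mean_rpow Finset.univ (w i) y
      (fun j _ => hw i j) (hrow i) (fun j _ => hy j) hp1
  have hsum : ∑ i, c i ^ p ≤ ∑ j, y j ^ p := by
    calc ∑ i, c i ^ p ≤ ∑ i, ∑ j, w i j * y j ^ p :=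
          Finset.sum_le_sum fun i _ => hjensen i
      _ = ∑ j, (∑ i, w i j) * y j ^ p := by
          rw [Finset.sum_comm]
          apply Finset.sum_congr rfl
          intro j _
          rw [Finset.sum_mul]
      _ = ∑ j, y j ^ p := by
          apply Finset.sum_congr rfl
          intro j _
          rw [hcol j, one_mul]
  have hTnn : 0 ≤ ∑ j, y j ^ p :=
    Finset.sum_nonneg fun j _ => Real.rpow_nonneg (hy j) _
  have hSnn : 0 ≤ ∑ i, x i ^ p :=
    Finset.sum_nonneg fun i _ => Real.rpow_nonneg (hx i) _
  rcases eq_or_lt_of_le hp1 with hp1e | hp1l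
  · -- p = 1
    subst hp1e
    simp only [sub_self, Real.rpow_zero, one_mul, Real.rpow_one, zero_div, div_one]
    simpa using hsum
  · -- 1 < p
    have hpq : (Real.conjExponent p).HolderConjugate p :=
      (Real.HolderConjugate.conjExponent hp1l).symm
    have hH := Real.inner_le_Lp_mul_Lq Finset.univ (fun i => x i ^ (p - 1)) c hpq
    have e1 : ∀ i : Fin n, |x i ^ (p - 1)| ^ (Real.conjExponent p) = x i ^ p := by
      intro i
      rw [abs_of_nonneg (Real.rpow_nonneg (hx i) _), ← Real.rpow_mul (hx i),
        hpq.symm.sub_one_mul_conj]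
    have e2 : ∀ i : Fin n, |c i| ^ p = c i ^ p := fun i => by
      rw [abs_of_nonneg (hcnn i)]
    have e3 : 1 / Real.conjExponent p = (p - 1) / p := by
      rw [Real.conjExponent, one_div_div]
    have hH' : ∑ i, x i ^ (p - 1) * c i
        ≤ (∑ i, x i ^ p) ^ ((p - 1) / p) * (∑ i, c i ^ p) ^ (1 / p) := by
      calc ∑ i, x i ^ (p - 1) * c i
          ≤ (∑ i, |x i ^ (p - 1)| ^ Real.conjExponent p) ^ (1 / Real.conjExponent p) *
            (∑ i, |c i| ^ p) ^ (1 / p) := hH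
        _ = (∑ i, x i ^ p) ^ ((p - 1) / p) * (∑ i, c i ^ p) ^ (1 / p) := by
            rw [e3]
            congr 1
            · congr 1
              exact Finset.sum_congr rfl fun i _ => e1 i
            · congr 1
              exact Finset.sum_congr rfl fun i _ => e2 i
    refine hH'.trans (mul_le_mul_of_nonneg_left ?_ (Real.rpow_nonneg hSnn _))
    exact Real.rpow_le_rpow
      (Finset.sum_nonneg fun i _ => Real.rpow_nonneg (hcnn i) _) hsum (by positivity)

/-- The scalar endgame. -/
lemma scalar_pb (q p S T D : ℝ) (hq1 : 1 < q) (hq2 : q ≤ 2) (hp : p = 1 / (q - 1))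
    (hS : 0 ≤ S) (hT : 0 ≤ T)
    (hH : D ≤ S ^ ((p - 1) / p) * T ^ (1 / p)) :
    S ^ (q - 2) * ((D - S) / (q - 1))
      ≤ (T ^ (q - 1) - 1) / (q - 1) - (S ^ (q - 1) - 1) / (q - 1) := by
  have hqpos : 0 < q - 1 := by linarith
  have hq1ne : q - 1 ≠ 0 := ne_of_gt hqpos
  have he1 : (p - 1) / p = 2 - q := by
    rw [hp]; field_simp; ring
  have he2 : 1 / p = q - 1 := by rw [hp, one_div_one_div]
  rw [he1, he2] at hH
  have hSq2 : 0 ≤ S ^ (q - 2) := Real.rpow_nonneg hS _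
  have key : S ^ (q - 2) * D ≤ T ^ (q - 1) := by
    rcases eq_or_lt_of_le hq2 with hq2e | hq2l
    · subst hq2e
      simpa using hH
    · rcases eq_or_lt_of_le hS with hS0 | hS0
      · rw [← hS0, Real.zero_rpow (by intro h; apply hq2l.ne; linarith), zero_mul]
        exact Real.rpow_nonneg hT _
      · calc S ^ (q - 2) * D ≤ S ^ (q - 2) * (S ^ (2 - q) * T ^ (q - 1)) :=
              mul_le_mul_of_nonneg_left hH hSq2
          _ = (S ^ (q - 2) * S ^ (2 - q)) * T ^ (q - 1) := by ring
          _ = T ^ (q - 1) := by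
              rw [← Real.rpow_add hS0]
              norm_num
  have keyS : S ^ (q - 2) * S = S ^ (q - 1) := by
    rcases eq_or_lt_of_le hS with hS0 | hS0
    · rcases eq_or_lt_of_le hq2 with hq2e | hq2l
      · subst hq2e
        rw [← hS0]
        norm_num
      · rw [← hS0, Real.zero_rpow (by intro h; apply hq2l.ne; linarith),
          Real.zero_rpow (by intro h; apply hq1.ne'; linarith), zero_mul]
    · have h := Real.rpow_add_one (ne_of_gt hS0) (q - 2)
      rw [show q - 2 + 1 = q - 1 by ring] at h
      exact h.symm
  calc S ^ (q - 2) * ((D - S) / (q - 1))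
      = (S ^ (q - 2) * D - S ^ (q - 2) * S) / (q - 1) := by ring
    _ = (S ^ (q - 2) * D - S ^ (q - 1)) / (q - 1) := by rw [keyS]
    _ ≤ (T ^ (q - 1) - S ^ (q - 1)) / (q - 1) := by
        exact div_le_div_of_nonneg_right (by linarith [key]) hqpos.le
    _ = (T ^ (q - 1) - 1) / (q - 1) - (S ^ (q - 1) - 1) / (q - 1) := by ring

/-- The core inequality, for explicit diagonalizations. -/
lemma pb_core (q : ℝ) (hq1 : 1 < q) (hq2 : q ≤ 2)
    (U W : Matrix (Fin n) (Fin n) ℂ)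
    (hU1 : star U * U = 1) (hU2 : U * star U = 1)
    (hW1 : star W * W = 1) (hW2 : W * star W = 1)
    (x y : Fin n → ℝ) (hx : ∀ i, 0 ≤ x i) (hy : ∀ j, 0 ≤ y j)
    (B : Matrix (Fin n) (Fin n) ℂ)
    (hYX : W * Matrix.diagonal (fun j => (y j : ℂ)) * star W
        = U * Matrix.diagonal (fun i => (x i : ℂ)) * star U + (q - 1) • B) :
    (∑ i, x i ^ (1 / (q - 1))) ^ (q - 2) *
      rtr (U * Matrix.diagonal (fun i => ((x i ^ (1 / (q - 1) - 1) : ℝ) : ℂ)) * star U * B)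
      ≤ ((∑ j, y j ^ (1 / (q - 1))) ^ (q - 1) - 1) / (q - 1)
        - ((∑ i, x i ^ (1 / (q - 1))) ^ (q - 1) - 1) / (q - 1) := by
  have hqpos : 0 < q - 1 := by linarith
  have hq1ne : q - 1 ≠ 0 := ne_of_gt hqpos
  have hp1 : 1 ≤ 1 / (q - 1) := by
    rw [le_div_iff₀ hqpos]; linarith
  set p : ℝ := 1 / (q - 1) with hpdef
  -- the transition matrix V = star U * W and its weights
  have hconj : star U * (W * Matrix.diagonal (fun j => (y j : ℂ)) * star W) * U
      = (star U * W) * Matrix.diagonal (fun j => (y j : ℂ)) * star (star U * W) := by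
    rw [Matrix.star_mul, star_star]
    simp only [mul_assoc]
  have hentry : ∀ i,
      (((star U * W) * Matrix.diagonal (fun j => (y j : ℂ)) * star (star U * W)) i i).re
      = ∑ j, Complex.normSq ((star U * W) i j) * y j := by
    intro i
    have h1 : ((star U * W) * Matrix.diagonal (fun j => (y j : ℂ)) * star (star U * W)) i i
        = ∑ j, (star U * W) i j * (y j : ℂ) * star ((star U * W) i j) := by
      rw [Matrix.mul_apply]
      apply Finset.sum_congr rfl
      intro j _
      rw [Matrix.mul_diagonal, Matrix.star_apply]
    rw [h1, Complex.re_sum]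
    apply Finset.sum_congr rfl
    intro j _
    have h2 : (star U * W) i j * (y j : ℂ) * star ((star U * W) i j)
        = ((Complex.normSq ((star U * W) i j) * y j : ℝ) : ℂ) := by
      calc (star U * W) i j * (y j : ℂ) * star ((star U * W) i j)
          = (y j : ℂ) * ((star U * W) i j * star ((star U * W) i j)) := by ring
        _ = (y j : ℂ) * ((Complex.normSq ((star U * W) i j) : ℝ) : ℂ) := by
            rw [Complex.star_def, Complex.mul_conj]
        _ = _ := by push_cast; ring
    rw [h2, Complex.ofReal_re]
  have hVV2 : (star U * W) * star (star U * W) = 1 := by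
    rw [Matrix.star_mul, star_star]
    calc star U * W * (star W * U) = star U * (W * star W) * U := by simp only [mul_assoc]
      _ = 1 := by rw [hW2, mul_one, hU1]
  have hVV1 : star (star U * W) * (star U * W) = 1 := by
    rw [Matrix.star_mul, star_star]
    calc star W * U * (star U * W) = star W * (U * star U) * W := by simp only [mul_assoc]
      _ = 1 := by rw [hU2, mul_one, hW1]
  have hrow : ∀ i, ∑ j, Complex.normSq ((star U * W) i j) = 1 := by
    intro i
    have h0 := congrFun (congrFun hVV2 i) i
    rw [Matrix.mul_apply, Matrix.one_apply_eq] at h0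
    simp only [Matrix.star_apply, Complex.star_def, Complex.mul_conj] at h0
    exact_mod_cast h0
  have hcol : ∀ j, ∑ i, Complex.normSq ((star U * W) i j) = 1 := by
    intro j
    have h0 := congrFun (congrFun hVV1 j) j
    rw [Matrix.mul_apply, Matrix.one_apply_eq] at h0
    have h1 : ∀ z : ℂ, star z * z = ((Complex.normSq z : ℝ) : ℂ) := fun z => by
      rw [Complex.star_def, mul_comm, Complex.mul_conj]
    simp only [Matrix.star_apply, h1] at h0
    exact_mod_cast h0
  -- traces
  have hPY : rtr (U * Matrix.diagonal (fun i => ((x i ^ (p - 1) : ℝ) : ℂ)) * star U *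
      (W * Matrix.diagonal (fun j => (y j : ℂ)) * star W))
      = ∑ i, x i ^ (p - 1) * (∑ j, Complex.normSq ((star U * W) i j) * y j) := by
    rw [rtr_unitary_diag_mul U hU1]
    apply Finset.sum_congr rfl
    intro i _
    rw [hconj, hentry i]
  have hPX : rtr (U * Matrix.diagonal (fun i => ((x i ^ (p - 1) : ℝ) : ℂ)) * star U *
      (U * Matrix.diagonal (fun i => (x i : ℂ)) * star U)) = ∑ i, x i ^ p := by
    rw [rtr_unitary_diag_mul U hU1]
    have hdg : star U * (U * Matrix.diagonal (fun i => (x i : ℂ)) * star U) * U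
        = Matrix.diagonal (fun i => (x i : ℂ)) := by
      simp only [mul_assoc, hU1, mul_one]
      rw [← mul_assoc, hU1, one_mul]
    rw [hdg]
    apply Finset.sum_congr rfl
    intro i _
    rw [Matrix.diagonal_apply_eq, Complex.ofReal_re]
    rcases eq_or_lt_of_le (hx i) with h0 | h0
    · rw [← h0, mul_zero, Real.zero_rpow (by positivity)]
    · rw [← Real.rpow_add_one (ne_of_gt h0), sub_add_cancel]
  have hsplit : rtr (U * Matrix.diagonal (fun i => ((x i ^ (p - 1) : ℝ) : ℂ)) * star U *
      (W * Matrix.diagonal (fun j => (y j : ℂ)) * star W))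
      = rtr (U * Matrix.diagonal (fun i => ((x i ^ (p - 1) : ℝ) : ℂ)) * star U *
          (U * Matrix.diagonal (fun i => (x i : ℂ)) * star U))
        + (q - 1) * rtr (U * Matrix.diagonal (fun i => ((x i ^ (p - 1) : ℝ) : ℂ)) * star U * B) := by
    rw [hYX, mul_add, Matrix.mul_smul]
    simp [rtr, Matrix.trace_add, Matrix.trace_smul, Complex.add_re, Complex.smul_re,
      smul_eq_mul]
  have hrtrPB : rtr (U * Matrix.diagonal (fun i => ((x i ^ (p - 1) : ℝ) : ℂ)) * star U * B)
      = ((∑ i, x i ^ (p - 1) * (∑ j, Complex.normSq ((star U * W) i j) * y j))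
          - ∑ i, x i ^ p) / (q - 1) := by
    rw [eq_div_iff hq1ne]
    rw [← hPY, hsplit, hPX]
    ring
  rw [hrtrPB]
  have hS : 0 ≤ ∑ i, x i ^ p :=
    Finset.sum_nonneg fun i _ => Real.rpow_nonneg (hx i) _
  have hT : 0 ≤ ∑ j, y j ^ p :=
    Finset.sum_nonneg fun j _ => Real.rpow_nonneg (hy j) _
  exact scalar_pb q p (∑ i, x i ^ p) (∑ j, y j ^ p) _ hq1 hq2 hpdef hS hT
    (trace_holder p hp1 x y (fun i j => Complex.normSq ((star U * W) i j))
      hx hy (fun i j => Complex.normSq_nonneg _) hrow hcol)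

theorem peierls_bogolyubov_ge {n : ℕ} (q : ℝ) (hq1 : 1 < q) (hq2 : q ≤ 2)
    (A B : Matrix (Fin n) (Fin n) ℂ) (hA : A.IsHermitian) (hB : B.IsHermitian)
    (hA' : ((q - 1) • A + 1).PosSemidef) (hAB : ((q - 1) • (A + B) + 1).PosSemidef) :
    (rtr (mexpq q A)) ^ (q - 2) * rtr (mpow (mexpq q A) (2 - q) * B) ≤
      dlog q (rtr (mexpq q (A + B))) - dlog q (rtr (mexpq q A)) := by
  have hq1' : q ≠ 1 := by intro h; rw [h] at hq1; exact lt_irrefl 1 hq1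
  have hqpos : 0 < q - 1 := by linarith
  have hABh : (A + B).IsHermitian := hA.add hB
  obtain ⟨U, hU1, hU2, lam, hAdec⟩ :
      ∃ U : Matrix (Fin n) (Fin n) ℂ, star U * U = 1 ∧ U * star U = 1 ∧
        ∃ lam : Fin n → ℝ, A = U * Matrix.diagonal (fun i => (lam i : ℂ)) * star U :=
    ⟨hA.eigenvectorUnitary, Matrix.mem_unitaryGroup_iff'.mp hA.eigenvectorUnitary.2,
      Matrix.mem_unitaryGroup_iff.mp hA.eigenvectorUnitary.2, hA.eigenvalues,
      hA.spectral_theorem⟩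
  obtain ⟨W, hW1, hW2, mu, hABdec⟩ :
      ∃ W : Matrix (Fin n) (Fin n) ℂ, star W * W = 1 ∧ W * star W = 1 ∧
        ∃ mu : Fin n → ℝ, A + B = W * Matrix.diagonal (fun j => (mu j : ℂ)) * star W :=
    ⟨hABh.eigenvectorUnitary, Matrix.mem_unitaryGroup_iff'.mp hABh.eigenvectorUnitary.2,
      Matrix.mem_unitaryGroup_iff.mp hABh.eigenvectorUnitary.2, hABh.eigenvalues,
      hABh.spectral_theorem⟩
  set x : Fin n → ℝ := fun i => (q - 1) * lam i + 1 with hxdef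
  set y : Fin n → ℝ := fun j => (q - 1) * mu j + 1 with hydef
  -- the shifted matrices
  have hXdec : U * Matrix.diagonal (fun i => (x i : ℂ)) * star U = (q - 1) • A + 1 := by
    have hd : Matrix.diagonal (fun i => (x i : ℂ))
        = (q - 1) • Matrix.diagonal (fun i => (lam i : ℂ)) + 1 := by
      ext i j
      rcases eq_or_ne i j with rfl | hij
      · simp only [Matrix.diagonal_apply_eq, Matrix.add_apply, Matrix.smul_apply,
          Matrix.one_apply_eq, hxdef, Complex.real_smul]
        push_cast
        ring
      · simp [Matrix.diagonal_apply_ne _ hij, Matrix.one_apply_ne hij]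
    rw [hd, mul_add, add_mul, mul_one, hU2, Matrix.mul_smul, Matrix.smul_mul, ← hAdec]
  have hYdec : W * Matrix.diagonal (fun j => (y j : ℂ)) * star W = (q - 1) • (A + B) + 1 := by
    have hd : Matrix.diagonal (fun j => (y j : ℂ))
        = (q - 1) • Matrix.diagonal (fun j => (mu j : ℂ)) + 1 := by
      ext i j
      rcases eq_or_ne i j with rfl | hij
      · simp only [Matrix.diagonal_apply_eq, Matrix.add_apply, Matrix.smul_apply,
          Matrix.one_apply_eq, hydef, Complex.real_smul]
        push_cast
        ring
      · simp [Matrix.diagonal_apply_ne _ hij, Matrix.one_apply_ne hij]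
    rw [hd, mul_add, add_mul, mul_one, hW2, Matrix.mul_smul, Matrix.smul_mul, ← hABdec]
  -- nonnegativity of the shifted eigenvalues
  have hx : ∀ i, 0 ≤ x i := by
    intro i
    have h2 := hA'.conjTranspose_mul_mul_same U
    rw [← hXdec] at h2
    have h3 : Uᴴ * (U * Matrix.diagonal (fun i => (x i : ℂ)) * star U) * U
        = Matrix.diagonal (fun i => (x i : ℂ)) := by
      rw [← Matrix.star_eq_conjTranspose]
      simp only [mul_assoc, hU1, mul_one]
      rw [← mul_assoc, hU1, one_mul]
    rw [h3] at h2
    exact Complex.zero_le_real.mp (Matrix.posSemidef_diagonal_iff.mp h2 i)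
  have hy : ∀ j, 0 ≤ y j := by
    intro j
    have h2 := hAB.conjTranspose_mul_mul_same W
    rw [← hYdec] at h2
    have h3 : Wᴴ * (W * Matrix.diagonal (fun j => (y j : ℂ)) * star W) * W
        = Matrix.diagonal (fun j => (y j : ℂ)) := by
      rw [← Matrix.star_eq_conjTranspose]
      simp only [mul_assoc, hW1, mul_one]
      rw [← mul_assoc, hW1, one_mul]
    rw [h3] at h2
    exact Complex.zero_le_real.mp (Matrix.posSemidef_diagonal_iff.mp h2 j)
  -- the deformed exponentials
  have hexp : mexpq q A
      = U * Matrix.diagonal (fun i => ((x i ^ (1 / (q - 1)) : ℝ) : ℂ)) * star U := by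
    rw [mexpq, hAdec, matFun_diag _ U hU1 hU2]
    congr 1
    congr 1
    funext i
    simp only [hxdef, if_neg hq1']
  have hexpAB : mexpq q (A + B)
      = W * Matrix.diagonal (fun j => ((y j ^ (1 / (q - 1)) : ℝ) : ℂ)) * star W := by
    rw [mexpq, hABdec, matFun_diag _ W hW1 hW2]
    congr 1
    congr 1
    funext j
    simp only [hydef, if_neg hq1']
  have hPow : mpow (mexpq q A) (2 - q)
      = U * Matrix.diagonal (fun i => ((x i ^ (1 / (q - 1) - 1) : ℝ) : ℂ)) * star U := by
    have hfun : (fun i => (((x i ^ (1 / (q - 1))) ^ (2 - q) : ℝ) : ℂ))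
        = (fun i => ((x i ^ (1 / (q - 1) - 1) : ℝ) : ℂ)) := by
      funext i
      rw [← Real.rpow_mul (hx i)]
      have he : 1 / (q - 1) * (2 - q) = 1 / (q - 1) - 1 := by
        field_simp
        ring
      rw [he]
    rw [mpow, hexp, matFun_diag _ U hU1 hU2, hfun]
  have hYX : W * Matrix.diagonal (fun j => (y j : ℂ)) * star W
      = U * Matrix.diagonal (fun i => (x i : ℂ)) * star U + (q - 1) • B := by
    rw [hXdec, hYdec, smul_add]
    abel
  rw [hPow, hexp, hexpAB, rtr_unitary_diag U hU1, rtr_unitary_diag W hW1]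
  simp only [dlog, if_neg hq1']
  exact pb_core q hq1 hq2 U W hU1 hU2 hW1 hW2 x y hx hy B hYX
end
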